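/- Let Q ∈ F_p(z)[x]_{≤Mn} be a polynomial in x of degree at most Mn, in the (n+1)-dimensional space spanned by Φ(x,z) and the polynomials Q_i(x,z), i=1,...,n. Then ∂Q/∂x = 0 if and only if Q lies in the span of the monomials x^{lp} with 0 ≤ lp ≤ Mn; in particular the kernel of ∂/∂x restricted to that space has dimension ak + 1. -/

import Mathlib

open Polynomial Finset

/-- `Φ(x)/(x−z_i)^r` as a polynomial: the exponent of `(x − z_i)` is lowered by `r`. -/
noncomputable def phiQuot {K : Type*} [Field K] (n M : ℕ) (z : Fin n → K)
    (i : Fin n) (r : ℕ) : K[X] :=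
  (X - C (z i)) ^ (M - r) * ∏ a ∈ univ.erase i, (X - C (z a)) ^ M

section Aux

variable {K : Type*} [Field K]

lemma derivative_finset_prod {ι : Type*} [DecidableEq ι] (s : Finset ι) (f : ι → K[X]) :
    derivative (∏ i ∈ s, f i) = ∑ i ∈ s, (∏ j ∈ s.erase i, f j) * derivative (f i) := by
  induction s using Finset.induction_on with
  | empty => simp
  | @insert a s ha ih =>
    rw [Finset.prod_insert ha, derivative_mul, ih, Finset.sum_insert ha,
      Finset.erase_insert ha, Finset.mul_sum]
    congr 1
    · exact mul_comm _ _
    · refine Finset.sum_congr rfl fun i hi => ?_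
      rw [Finset.erase_insert_of_ne (fun h => ha (by rw [h]; exact hi)),
        Finset.prod_insert (fun h => ha (Finset.mem_of_mem_erase h)), mul_assoc]

lemma natDegree_phiQuot_le (n M : ℕ) (z : Fin n → K) (i : Fin n) (r : ℕ) :
    (phiQuot n M z i r).natDegree ≤ M * n := by
  unfold phiQuot
  refine natDegree_mul_le.trans ?_
  have h1 : ((X - C (z i)) ^ (M - r)).natDegree ≤ M - r := by
    simpa [natDegree_X_sub_C] using
      (natDegree_pow_le (p := X - C (z i)) (n := M - r))
  have h2 : (∏ a ∈ univ.erase i, (X - C (z a)) ^ M).natDegree ≤ (n - 1) * M := by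
    refine (natDegree_prod_le _ _).trans ?_
    have : ∀ a ∈ univ.erase i, ((X - C (z a)) ^ M).natDegree ≤ M := by
      intro a _
      simpa [natDegree_X_sub_C] using (natDegree_pow_le (p := X - C (z a)) (n := M))
    refine (Finset.sum_le_sum this).trans ?_
    rw [Finset.sum_const, Finset.card_erase_of_mem (mem_univ i), card_univ, Fintype.card_fin,
      smul_eq_mul]
  have hn : 1 ≤ n := i.pos
  obtain ⟨m, rfl⟩ : ∃ m, n = m + 1 := ⟨n - 1, by omega⟩
  calc ((X - C (z i)) ^ (M - r)).natDegree
        + (∏ a ∈ univ.erase i, (X - C (z a)) ^ M).natDegree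
      ≤ (M - r) + (m + 1 - 1) * M := Nat.add_le_add h1 h2
    _ ≤ M + m * M := by simp only [Nat.add_sub_cancel]; exact Nat.add_le_add_right (Nat.sub_le M r) _
    _ = M * (m + 1) := by ring

lemma monic_Phi (n M : ℕ) (z : Fin n → K) : (∏ b : Fin n, (X - C (z b)) ^ M).Monic :=
  monic_prod_of_monic _ _ fun b _ => (monic_X_sub_C (z b)).pow M

lemma natDegree_Phi (n M : ℕ) (z : Fin n → K) :
    (∏ b : Fin n, (X - C (z b)) ^ M).natDegree = M * n := by
  rw [natDegree_prod _ _ (fun b _ => pow_ne_zero _ (X_sub_C_ne_zero (z b)))]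
  simp [natDegree_pow, natDegree_X_sub_C, Finset.sum_const, card_univ, mul_comm]

lemma derivative_Phi (n M : ℕ) (z : Fin n → K) :
    derivative (∏ b : Fin n, (X - C (z b)) ^ M) = ∑ i : Fin n, (M : K) • phiQuot n M z i 1 := by
  rw [derivative_finset_prod]
  refine Finset.sum_congr rfl fun i _ => ?_
  rw [derivative_pow, derivative_X_sub_C]
  unfold phiQuot
  rw [smul_eq_C_mul]
  push_cast
  ring

lemma eval_phiQuot_ne (n M : ℕ) (z : Fin n → K) (hM : 1 ≤ M) {i j : Fin n} (hij : j ≠ i)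
    (r : ℕ) : eval (z j) (phiQuot n M z i r) = 0 := by
  unfold phiQuot
  rw [eval_mul, eval_prod]
  rw [Finset.prod_eq_zero (Finset.mem_erase.2 ⟨hij, mem_univ j⟩)
    (by simp [zero_pow (by omega : M ≠ 0)]), mul_zero]

lemma eval_phiQuot_self_lt (n M : ℕ) (z : Fin n → K) (i : Fin n) {r : ℕ} (hr : r < M) :
    eval (z i) (phiQuot n M z i r) = 0 := by
  unfold phiQuot
  rw [eval_mul]
  simp [zero_pow (by omega : M - r ≠ 0)]

lemma eval_phiQuot_self_M (n M : ℕ) (z : Fin n → K) (hinj : Function.Injective z) (i : Fin n) :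
    eval (z i) (phiQuot n M z i M) ≠ 0 := by
  unfold phiQuot
  rw [eval_mul, eval_prod]
  simp only [Nat.sub_self, pow_zero, eval_one, one_mul]
  rw [Finset.prod_ne_zero_iff]
  intro a ha
  have : z i - z a ≠ 0 := sub_ne_zero.2 fun h => (Finset.mem_erase.1 ha).1 (hinj h.symm)
  simp [this]

lemma pow_dvd_phiQuot (n M : ℕ) (z : Fin n → K) (i j : Fin n) :
    (X - C (z i)) ^ (M - 1) ∣ phiQuot n M z j 1 := by
  unfold phiQuot
  by_cases h : i = j
  · subst h; exact dvd_mul_right _ _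
  · have h1 : (X - C (z i)) ^ M ∣ ∏ a ∈ univ.erase j, (X - C (z a)) ^ M :=
      Finset.dvd_prod_of_mem _ (Finset.mem_erase.2 ⟨fun hh => h hh, mem_univ i⟩)
    exact (pow_dvd_pow _ (Nat.sub_le M 1)).trans (h1.trans (dvd_mul_left _ _))

end Aux
section Aux2

variable {K : Type*} [Field K]

/-- If `0 ≤ r < p` would make `r` invertible; key multiplicity step. -/
lemma rootMult_ge {p : ℕ} (hp : p.Prime) [CharP K p] {M : ℕ} (hMp : M < p) (hM1 : 1 ≤ M)
    {F : K[X]} (hF : F ≠ 0) {c : K} (hev : eval c F = 0)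
    (hder : (X - C c) ^ (M - 1) ∣ derivative F) : (X - C c) ^ M ∣ F := by
  set r := rootMultiplicity c F with hrdef
  have hr1 : 1 ≤ r := (rootMultiplicity_pos hF).2 hev
  set G := F /ₘ (X - C c) ^ r with hGdef
  have hFG : (X - C c) ^ r * G = F := pow_mul_divByMonic_rootMultiplicity_eq F c
  have hGa : eval c G ≠ 0 := eval_divByMonic_pow_rootMultiplicity_ne_zero c hF
  rcases le_or_gt M r with h | h
  · exact (pow_dvd_pow _ h).trans ⟨G, hFG.symm⟩
  · exfalso
    set H := C ((r : K)) * G + (X - C c) * derivative G with hHdef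
    have hdF : derivative F = (X - C c) ^ (r - 1) * H := by
      have hpow : (X - C c) ^ r = (X - C c) ^ (r - 1) * (X - C c) := by
        rw [← pow_succ, Nat.sub_add_cancel hr1]
      rw [← hFG, derivative_mul, derivative_pow, derivative_X_sub_C, hpow, hHdef]
      ring
    have hrK : ((r : K)) ≠ 0 := by
      rw [Ne, CharP.cast_eq_zero_iff K p]
      intro hdd
      have := Nat.le_of_dvd (by omega) hdd
      omega
    have hHc : eval c H ≠ 0 := by
      simp only [hHdef, eval_add, eval_mul, eval_C, eval_sub, eval_X, sub_self, zero_mul, add_zero]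
      exact mul_ne_zero hrK hGa
    have hdvd2 : (X - C c) ^ (r - 1) * (X - C c) ^ (M - r) ∣ (X - C c) ^ (r - 1) * H := by
      rw [← pow_add, show r - 1 + (M - r) = M - 1 by omega, ← hdF]
      exact hder
    have hXd : (X - C c) ∣ H := by
      have h2 : (X - C c) ^ (M - r) ∣ H :=
        (mul_dvd_mul_iff_left (pow_ne_zero _ (X_sub_C_ne_zero c))).mp hdvd2
      calc (X - C c) = (X - C c) ^ 1 := (pow_one _).symm
        _ ∣ (X - C c) ^ (M - r) := pow_dvd_pow _ (by omega)
        _ ∣ H := h2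
    exact hHc (dvd_iff_isRoot.mp hXd)

/-- Key vanishing lemma. -/
lemma key_zero {p : ℕ} (hp : p.Prime) [CharP K p] {n M : ℕ} {z : Fin n → K}
    (hinj : Function.Injective z) (hM1 : 1 ≤ M) (hMp : M < p)
    {F : K[X]} (hdeg : F.natDegree ≤ M * n)
    (hder : ∀ i, (X - C (z i)) ^ (M - 1) ∣ derivative F)
    (hev : ∀ i, eval (z i) F = 0)
    (hc : F.coeff (M * n) = 0) : F = 0 := by
  by_contra hF
  have hmul : ∀ i, (X - C (z i)) ^ M ∣ F := fun i =>
    rootMult_ge hp hMp hM1 hF (hev i) (hder i)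
  have hPhi : (∏ b : Fin n, (X - C (z b)) ^ M) ∣ F := by
    refine Finset.prod_dvd_of_coprime ?_ (fun i _ => hmul i)
    exact ((Polynomial.pairwise_coprime_X_sub_C hinj).mono
      (fun i j h => h.pow)).set_pairwise _
  obtain ⟨G, hG⟩ := hPhi
  have hPne : (∏ b : Fin n, (X - C (z b)) ^ M) ≠ 0 := (monic_Phi n M z).ne_zero
  have hGne : G ≠ 0 := fun h => hF (by simp [hG, h])
  have hdegG : G.natDegree = 0 := by
    have h1 := natDegree_mul hPne hGne
    rw [← hG, natDegree_Phi] at h1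
    omega
  obtain ⟨c, hcC⟩ := natDegree_eq_zero.mp hdegG
  have : F.coeff (M * n) = c := by
    rw [hG, ← hcC, mul_comm, coeff_C_mul]
    have := (monic_Phi n M z).coeff_natDegree
    rw [natDegree_Phi] at this
    rw [this, mul_one]
  rw [hc] at this
  exact hF (by rw [hG, ← hcC, ← this]; simp)

/-- derivative zero with degree bound puts `F` in the span of `X^{lp}`. -/
lemma mem_monomial_span {p : ℕ} [CharP K p] (hp : p ≠ 0) {D : ℕ} {F : K[X]}
    (hdeg : F.natDegree ≤ D) (hder : derivative F = 0) :
    F ∈ Submodule.span K ((fun l : ℕ => (X : K[X]) ^ (l * p)) '' {l : ℕ | l * p ≤ D}) := by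
  have hcoeff : ∀ m : ℕ, ¬ p ∣ m → F.coeff m = 0 := by
    intro m hm
    match m with
    | 0 => exact absurd (dvd_zero p) hm
    | Nat.succ m =>
      have h1 := coeff_derivative F m
      rw [hder, coeff_zero] at h1
      have hnz : ((m : K) + 1) ≠ 0 := by
        have : ((m + 1 : ℕ) : K) ≠ 0 := by
          rw [Ne, CharP.cast_eq_zero_iff K p]; exact hm
        simpa using this
      exact (mul_eq_zero.mp h1.symm).resolve_right hnz
  nth_rewrite 1 [F.as_sum_support]
  refine Submodule.sum_mem _ fun i hi => ?_
  have hpi : p ∣ i := by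
    by_contra h
    exact (Polynomial.mem_support_iff.mp hi) (hcoeff i h)
  obtain ⟨l, rfl⟩ := hpi
  have hmono : (Polynomial.monomial (p * l)) (F.coeff (p * l))
      = (F.coeff (p * l)) • (X : K[X]) ^ (l * p) := by
    rw [smul_eq_C_mul, C_mul_X_pow_eq_monomial, mul_comm l p]
  rw [hmono]
  refine Submodule.smul_mem _ _ (Submodule.subset_span ⟨l, ?_, rfl⟩)
  have : p * l ≤ F.natDegree := Polynomial.le_natDegree_of_mem_supp _ hi
  show l * p ≤ D
  rw [mul_comm]
  omega

end Aux2
section Main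

lemma stmt15_general {K : Type*} [Field K] (p q n k a M : ℕ) (hp : p.Prime) [CharP K p]
    (hq : q.Prime) (hk : 0 < k) (hn : n = k * q + 1) (hpn : p > n) (hpq : p > q)
    (ha1 : 1 ≤ a) (ha2 : a < q) (hdvd : q ∣ (a * p - 1)) (hM : M = (a * p - 1) / q)
    (z : Fin n → K) (hinj : Function.Injective z)
    (Q : Fin n → K[X])
    (hQform : ∀ j, ∃ A : Fin (M - 1) → K,
      Q j = phiQuot n M z j M + ∑ m : Fin (M - 1), C (A m) * phiQuot n M z j (m.1 + 1))
    (hQder : ∀ j, derivative (Q j) ∈ Submodule.span K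
      (Set.range fun i : Fin n => phiQuot n M z i 1)) :
    (∀ F ∈ Submodule.span K ({∏ b : Fin n, (X - C (z b)) ^ M} ∪ Set.range Q),
      (derivative F = 0 ↔ F ∈ Submodule.span K
        ((fun l : ℕ => (X : K[X]) ^ (l * p)) '' {l : ℕ | l * p ≤ M * n}))) ∧
    Module.finrank K
      ↥(Submodule.span K ({∏ b : Fin n, (X - C (z b)) ^ M} ∪ Set.range Q) ⊓
        LinearMap.ker (Polynomial.derivative (R := K))) = a * k + 1 := by
  -- Arithmetic facts
  have hp2 : 2 ≤ p := hp.two_le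
  have hq2 : 2 ≤ q := hq.two_le
  have hap : a * p = q * M + 1 := by
    subst hM
    have h1 : q * ((a * p - 1) / q) = a * p - 1 := Nat.mul_div_cancel' hdvd
    have h2 : 0 < a * p := Nat.mul_pos (by omega) (by omega)
    omega
  have hM1 : 1 ≤ M := by
    rcases Nat.eq_zero_or_pos M with h | h
    · exfalso
      have h2 : 2 ≤ a * p := le_trans hp2 (Nat.le_mul_of_pos_left p (by omega))
      rw [h, Nat.mul_zero] at hap
      omega
    · exact h
  have hMp : M < p := by
    have h1 : a * p ≤ (q - 1) * p := Nat.mul_le_mul_right p (by omega)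
    have h2 : (q - 1) * p = q * p - p := by rw [Nat.sub_one_mul]
    have h3 : q * M < q * p := by omega
    exact lt_of_mul_lt_mul_left h3 (Nat.zero_le q)
  have hkM : k ≤ M := by
    have h1 : k * q + 1 < p := by omega
    have h2 : p ≤ a * p := Nat.le_mul_of_pos_left p (by omega)
    have h4 : k * q = q * k := Nat.mul_comm k q
    have h3 : q * k < q * M := by omega
    exact le_of_lt (lt_of_mul_lt_mul_left h3 (Nat.zero_le q))
  have hMn : M * n = a * k * p + (M - k) := by
    have h1 : M * n + k = a * k * p + M := by
      calc M * n + k = M * (k * q + 1) + k := by rw [hn]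
        _ = (q * M + 1) * k + M := by ring
        _ = (a * p) * k + M := by rw [hap]
        _ = a * k * p + M := by ring
    omega
  have harith : ∀ l : ℕ, l * p ≤ M * n ↔ l < a * k + 1 := by
    intro l
    constructor
    · intro h
      by_contra hc
      have h1 : (a * k + 1) * p ≤ l * p := Nat.mul_le_mul_right p (by omega)
      have h2 : (a * k + 1) * p = a * k * p + p := by ring
      omega
    · intro h
      have h1 : l * p ≤ (a * k) * p := Nat.mul_le_mul_right p (by omega)
      have h2 : (a * k) * p = a * k * p := by ring
      omega
  have hppos : p ≠ 0 := by omega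
  -- Notation
  set Φ : K[X] := ∏ b : Fin n, (X - C (z b)) ^ M with hΦ
  set S : Set K[X] := {Φ} ∪ Set.range Q with hS
  set Ω : Submodule K K[X] :=
    Submodule.span K (Set.range fun i : Fin n => phiQuot n M z i 1) with hΩ
  set W : Set K[X] := (fun l : ℕ => (X : K[X]) ^ (l * p)) '' {l : ℕ | l * p ≤ M * n} with hW
  set P : Submodule K K[X] :=
    degreeLT K (M * n + 1) ⊓ Submodule.comap (derivative (R := K)) Ω with hP
  -- degree helpers
  have hmemLT : ∀ F : K[X], F.natDegree ≤ M * n → F ∈ degreeLT K (M * n + 1) := by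
    intro F h
    rw [Polynomial.mem_degreeLT]
    calc F.degree ≤ (F.natDegree : WithBot ℕ) := degree_le_natDegree
      _ < ((M * n + 1 : ℕ) : WithBot ℕ) := by exact_mod_cast Nat.lt_succ_of_le h
  have hdeg_of_LT : ∀ F : K[X], F ∈ degreeLT K (M * n + 1) → F.natDegree ≤ M * n := by
    intro F h
    by_cases h0 : F = 0
    · simp [h0]
    · have := (natDegree_lt_iff_degree_lt h0).2 (Polynomial.mem_degreeLT.1 h)
      omega
  -- facts about Q
  have hQdeg : ∀ j, Q j ∈ degreeLT K (M * n + 1) := by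
    intro j
    obtain ⟨A, hA⟩ := hQform j
    rw [hA]
    refine Submodule.add_mem _ (hmemLT _ (natDegree_phiQuot_le n M z j M))
      (Submodule.sum_mem _ fun m _ => ?_)
    rw [← smul_eq_C_mul]
    exact Submodule.smul_mem _ _ (hmemLT _ (natDegree_phiQuot_le n M z j _))
  have hQeval_ne : ∀ i j : Fin n, j ≠ i → eval (z j) (Q i) = 0 := by
    intro i j hij
    obtain ⟨A, hA⟩ := hQform i
    rw [hA, eval_add, eval_finset_sum, eval_phiQuot_ne n M z hM1 hij M]
    rw [Finset.sum_eq_zero fun m _ => by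
      rw [eval_mul, eval_phiQuot_ne n M z hM1 hij, mul_zero]]
    simp
  have hQeval_self : ∀ j, eval (z j) (Q j) ≠ 0 := by
    intro j
    obtain ⟨A, hA⟩ := hQform j
    rw [hA, eval_add, eval_finset_sum]
    rw [Finset.sum_eq_zero fun m _ => by
      have hm := m.isLt
      rw [eval_mul, eval_phiQuot_self_lt n M z j (by omega), mul_zero]]
    rw [add_zero]
    exact eval_phiQuot_self_M n M z hinj j
  have hΦeval : ∀ j, eval (z j) Φ = 0 := by
    intro j
    rw [hΦ, eval_prod]
    exact Finset.prod_eq_zero (mem_univ j)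
      (by simp [zero_pow (show M ≠ 0 by omega)])
  have hΦne : Φ ≠ 0 := by rw [hΦ]; exact (monic_Phi n M z).ne_zero
  -- Ω facts
  have hΩdvd : ∀ F : K[X], F ∈ Ω → ∀ i, (X - C (z i)) ^ (M - 1) ∣ F := by
    intro F hF i
    have hle : Ω ≤ (Ideal.span {(X - C (z i)) ^ (M - 1)}).restrictScalars K := by
      rw [hΩ]
      refine Submodule.span_le.2 ?_
      rintro _ ⟨j, rfl⟩
      exact Ideal.mem_span_singleton.2 (pow_dvd_phiQuot n M z i j)
    exact Ideal.mem_span_singleton.1 (hle hF)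
  -- span S ≤ P
  have hSP : Submodule.span K S ≤ P := by
    refine Submodule.span_le.2 ?_
    rintro F (rfl | ⟨j, rfl⟩)
    · refine Submodule.mem_inf.2 ⟨hmemLT Φ (le_of_eq (by rw [hΦ]; exact natDegree_Phi n M z)), ?_⟩
      refine Submodule.mem_comap.2 ?_
      rw [hΦ, derivative_Phi n M z]
      exact Submodule.sum_mem _ fun i _ =>
        Submodule.smul_mem _ _ (Submodule.subset_span ⟨i, rfl⟩)
    · exact Submodule.mem_inf.2 ⟨hQdeg j, Submodule.mem_comap.2 (hQder j)⟩
  -- monomials have zero derivative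
  have hWder : ∀ F ∈ W, derivative F = 0 := by
    rintro _ ⟨l, _, rfl⟩
    rw [derivative_X_pow]
    have hc0 : ((l * p : ℕ) : K) = 0 := by
      rw [Nat.cast_mul, CharP.cast_eq_zero K p, mul_zero]
    rw [hc0, map_zero, zero_mul]
  -- finite dimensionality and rank bound on P
  haveI : FiniteDimensional K (degreeLT K (M * n + 1) : Submodule K K[X]) :=
    (Polynomial.degreeLTEquiv K (M * n + 1)).symm.finiteDimensional
  haveI : FiniteDimensional K P := Submodule.finiteDimensional_of_le inf_le_left
  set φ : P →ₗ[K] (Fin n → K) × K :=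
    ((LinearMap.pi fun i : Fin n => leval (z i)).prod (lcoeff K (M * n))).comp P.subtype with hφ
  have hφinj : Function.Injective φ := by
    rw [← LinearMap.ker_eq_bot, Submodule.eq_bot_iff]
    rintro ⟨F, hF⟩ hker
    simp only [hφ, LinearMap.mem_ker, LinearMap.comp_apply, LinearMap.prod_apply,
      Submodule.coe_subtype, LinearMap.pi_apply, leval_apply, lcoeff_apply,
      Function.prod, Prod.mk_eq_zero] at hker
    obtain ⟨h1, h2⟩ := hker
    have hdegF : F.natDegree ≤ M * n := hdeg_of_LT F (Submodule.mem_inf.1 hF).1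
    have hderF : ∀ i, (X - C (z i)) ^ (M - 1) ∣ derivative F :=
      hΩdvd _ (Submodule.mem_comap.1 (Submodule.mem_inf.1 hF).2)
    have hevF : ∀ i, eval (z i) F = 0 := fun i => congrFun h1 i
    have hFz : F = 0 := key_zero hp hinj hM1 hMp hdegF hderF hevF h2
    exact Subtype.ext hFz
  have hPrank : Module.finrank K P ≤ n + 1 := by
    have h := LinearMap.finrank_le_finrank_of_injective hφinj
    rwa [Module.finrank_prod, Module.finrank_pi, Module.finrank_self, Fintype.card_fin] at h
  -- linear independence of the generators
  have hli : LinearIndependent K (Fin.cons Φ Q : Fin (n + 1) → K[X]) := by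
    rw [Fintype.linearIndependent_iff]
    intro g hg
    have hsum : ∑ i : Fin (n + 1), g i • Fin.cons Φ Q i
        = g 0 • Φ + ∑ i : Fin n, g i.succ • Q i := by
      rw [Fin.sum_univ_succ]
      simp [Fin.cons_zero, Fin.cons_succ]
    rw [hsum] at hg
    have hzero : ∀ j : Fin n, g j.succ = 0 := by
      intro j
      have hev := congrArg (eval (z j)) hg
      rw [eval_add, eval_smul, eval_finset_sum, eval_zero] at hev
      simp only [eval_smul, smul_eq_mul] at hev
      rw [hΦeval j, mul_zero, zero_add] at hev
      rw [Finset.sum_eq_single j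
        (fun b _ hbj => by rw [hQeval_ne b j (Ne.symm hbj), mul_zero])
        (fun h => absurd (mem_univ j) h)] at hev
      exact (mul_eq_zero.mp hev).resolve_right (hQeval_self j)
    have hsz : ∑ i : Fin n, g i.succ • Q i = 0 :=
      Finset.sum_eq_zero fun i _ => by rw [hzero i, zero_smul]
    rw [hsz, add_zero] at hg
    intro i
    refine Fin.cases ?_ (fun j => hzero j) i
    rcases smul_eq_zero.mp hg with h | h
    · exact h
    · exact absurd h hΦne
  have hSrange : S = Set.range (Fin.cons Φ Q : Fin (n + 1) → K[X]) := by
    rw [Fin.range_cons, hS, Set.singleton_union]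
  have hSrank : Module.finrank K (Submodule.span K S) = n + 1 := by
    rw [hSrange, finrank_span_eq_card hli, Fintype.card_fin]
  have hPS : Submodule.span K S = P :=
    Submodule.eq_of_le_of_finrank_le hSP (by rw [hSrank]; exact hPrank)
  -- part 1
  have hpart1 : ∀ F ∈ Submodule.span K S,
      (derivative F = 0 ↔ F ∈ Submodule.span K W) := by
    intro F hF
    constructor
    · intro hd
      have hFP : F ∈ P := hPS ▸ hF
      have hdegF : F.natDegree ≤ M * n := hdeg_of_LT F (Submodule.mem_inf.1 hFP).1
      exact mem_monomial_span hppos hdegF hd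
    · intro hFW
      have hle : Submodule.span K W ≤ LinearMap.ker (derivative (R := K)) := by
        rw [Submodule.span_le]
        intro G hG
        exact LinearMap.mem_ker.2 (hWder G hG)
      exact LinearMap.mem_ker.1 (hle hFW)
  -- part 2
  have hWspanle : Submodule.span K W ≤ Submodule.span K S := by
    rw [hPS]
    refine Submodule.span_le.2 ?_
    rintro G hG
    obtain ⟨l, hl, rfl⟩ := hG
    refine Submodule.mem_inf.2 ⟨hmemLT _ ?_, Submodule.mem_comap.2 ?_⟩
    · rw [natDegree_X_pow]
      exact hl
    · rw [hWder _ ⟨l, hl, rfl⟩]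
      exact Submodule.zero_mem _
  have hinfW : Submodule.span K S ⊓ LinearMap.ker (derivative (R := K))
      = Submodule.span K W := by
    apply le_antisymm
    · intro F hF
      exact (hpart1 F (Submodule.mem_inf.1 hF).1).1
        (LinearMap.mem_ker.1 (Submodule.mem_inf.1 hF).2)
    · refine le_inf hWspanle ?_
      rw [Submodule.span_le]
      intro G hG
      exact LinearMap.mem_ker.2 (hWder G hG)
  set v : Fin (a * k + 1) → K[X] := fun l => (X : K[X]) ^ (l.1 * p) with hv
  have hWv : W = Set.range v := by
    ext f
    constructor
    · rintro ⟨l, hl, rfl⟩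
      exact ⟨⟨l, (harith l).1 hl⟩, rfl⟩
    · rintro ⟨l, rfl⟩
      exact ⟨l.1, (harith l.1).2 l.2, rfl⟩
  have hvli : LinearIndependent K v := by
    rw [Fintype.linearIndependent_iff]
    intro g hg j
    have hco : (∑ i : Fin (a * k + 1), g i • v i).coeff (j.1 * p) = g j := by
      rw [finset_sum_coeff]
      rw [Finset.sum_eq_single j ?_ (fun h => absurd (mem_univ j) h)]
      · rw [hv]
        simp [coeff_smul, coeff_X_pow]
      · intro b _ hbj
        have hbp : ¬ (j.1 * p = b.1 * p) := by
          intro h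
          exact hbj (Fin.ext (Nat.eq_of_mul_eq_mul_right (by omega) h.symm))
        rw [hv]
        simp [coeff_smul, coeff_X_pow, hbp]
    rw [hg, coeff_zero] at hco
    exact hco.symm
  have hfinW : Module.finrank K (Submodule.span K W) = a * k + 1 := by
    rw [hWv, finrank_span_eq_card hvli, Fintype.card_fin]
  exact ⟨hpart1, by rw [hinfW, hfinW]⟩

end Main

/-- Over `𝔽_p(z)`, let `𝒬` be the `(n+1)`-dimensional space
spanned by `Φ` and the polynomials `Q_1,…,Q_n`.  For `F ∈ 𝒬`, `∂F/∂x = 0` iff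
`F` lies in the span of the monomials `x^{lp}` with `lp ≤ Mn`; in particular
the kernel of `∂/∂x` restricted to `𝒬` has dimension `ak + 1`. -/
theorem stmt15 (p q n k a M : ℕ) [Fact p.Prime] (hq : q.Prime)
    (hk : 0 < k) (hn : n = k * q + 1) (hpn : p > n) (hpq : p > q)
    (ha1 : 1 ≤ a) (ha2 : a < q) (hdvd : q ∣ (a * p - 1))
    (hM : M = (a * p - 1) / q)
    (z : Fin n → FractionRing (MvPolynomial (Fin n) (ZMod p)))
    (hzdef : z = fun j => algebraMap (MvPolynomial (Fin n) (ZMod p)) _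
      (MvPolynomial.X j))
    (Q : Fin n → (FractionRing (MvPolynomial (Fin n) (ZMod p)))[X])
    (hQform : ∀ j, ∃ A : Fin (M - 1) → FractionRing (MvPolynomial (Fin n) (ZMod p)),
      Q j = phiQuot n M z j M +
        ∑ m : Fin (M - 1), C (A m) * phiQuot n M z j (m.1 + 1))
    (hQder : ∀ j, derivative (Q j)
      ∈ Submodule.span (FractionRing (MvPolynomial (Fin n) (ZMod p)))
        (Set.range fun i : Fin n => phiQuot n M z i 1)) :
    (∀ F ∈ Submodule.span (FractionRing (MvPolynomial (Fin n) (ZMod p)))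
        ({∏ b : Fin n, (X - C (z b)) ^ M} ∪ Set.range Q),
      (derivative F = 0 ↔
        F ∈ Submodule.span (FractionRing (MvPolynomial (Fin n) (ZMod p)))
          ((fun l : ℕ => (X : (FractionRing (MvPolynomial (Fin n) (ZMod p)))[X]) ^ (l * p))
            '' {l : ℕ | l * p ≤ M * n}))) ∧
    Module.finrank (FractionRing (MvPolynomial (Fin n) (ZMod p)))
      ↥(Submodule.span (FractionRing (MvPolynomial (Fin n) (ZMod p)))
          ({∏ b : Fin n, (X - C (z b)) ^ M} ∪ Set.range Q) ⊓
        LinearMap.ker (Polynomial.derivative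
          (R := FractionRing (MvPolynomial (Fin n) (ZMod p)))))
      = a * k + 1 := by
  have hp : p.Prime := Fact.out
  haveI : Fact (1 < p) := ⟨hp.one_lt⟩
  haveI : CharP (FractionRing (MvPolynomial (Fin n) (ZMod p))) p :=
    charP_of_injective_algebraMap
      (IsFractionRing.injective (MvPolynomial (Fin n) (ZMod p)) _) p
  have hinj : Function.Injective z := by
    rw [hzdef]
    exact (IsFractionRing.injective (MvPolynomial (Fin n) (ZMod p)) _).comp
      MvPolynomial.X_injective
  exact stmt15_general p q n k a M hp hq hk hn hpn hpq ha1 ha2 hdvd hM z hinj Q hQform hQder
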